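/- If X and Y are conditionally independent given θ, and T_x(X) is locally sufficient for θ given X (θ–T_x(X)–X Markov chain) and T_y(Y) is locally sufficient for θ given Y (θ–T_y(Y)–Y Markov chain), then (T_x(X), T_y(Y)) is globally sufficient for θ, i.e., θ–(T_x(X),T_y(Y))–(X,Y) is a Markov chain. -/
import Mathlib

open scoped Classical BigOperators

/-- Probability of a set of outcomes under a pmf `p` on a finite sample space. -/
noncomputable def pr {Ω : Type*} [Fintype Ω] (p : Ω → ℝ) (s : Set Ω) : ℝ :=
  ∑ ω, if ω ∈ s then p ω else 0

/-- `p` is a probability mass function on the finite sample space `Ω`. -/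
def IsPMF {Ω : Type*} [Fintype Ω] (p : Ω → ℝ) : Prop :=
  (∀ ω, 0 ≤ p ω) ∧ (∑ ω, p ω) = 1

/-- The Markov chain `A – B – C`: `A` and `C` are conditionally independent given `B`. -/
def MarkovChain {Ω α β γ : Type*} [Fintype Ω] (p : Ω → ℝ)
    (A : Ω → α) (B : Ω → β) (C : Ω → γ) : Prop :=
  ∀ (a : α) (b : β) (c : γ),
    pr p {ω | A ω = a ∧ B ω = b ∧ C ω = c} * pr p {ω | B ω = b} =
      pr p {ω | A ω = a ∧ B ω = b} * pr p {ω | B ω = b ∧ C ω = c}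

section Helper
variable {Ω : Type*} [Fintype Ω] (p : Ω → ℝ)

lemma pr_congr {s t : Set Ω} (h : ∀ ω, ω ∈ s ↔ ω ∈ t) : pr p s = pr p t := by
  unfold pr; exact Finset.sum_congr rfl fun ω _ => by simp [h ω]

lemma pr_empty {s : Set Ω} (h : ∀ ω, ω ∉ s) : pr p s = 0 := by
  unfold pr
  refine Finset.sum_eq_zero fun ω _ => by simp [h ω]

lemma pr_nonneg (hp : ∀ ω, 0 ≤ p ω) (s : Set Ω) : 0 ≤ pr p s :=
  Finset.sum_nonneg fun ω _ => by by_cases h : ω ∈ s <;> simp [h, hp ω]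

lemma pr_mono (hp : ∀ ω, 0 ≤ p ω) {s t : Set Ω} (hsub : ∀ ω, ω ∈ s → ω ∈ t) :
    pr p s ≤ pr p t := by
  unfold pr
  refine Finset.sum_le_sum fun ω _ => ?_
  by_cases h : ω ∈ s
  · simp [h, hsub ω h]
  · by_cases h2 : ω ∈ t <;> simp [h, h2, hp ω]

lemma pr_zero_of_subset (hp : ∀ ω, 0 ≤ p ω) {s t : Set Ω}
    (hsub : ∀ ω, ω ∈ s → ω ∈ t) (ht : pr p t = 0) : pr p s = 0 :=
  le_antisymm (ht ▸ pr_mono p hp hsub) (pr_nonneg p hp s)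

lemma pr_split {V : Type*} (F : Ω → V) (C : Ω → Prop) :
    pr p {ω | C ω} = ∑ v ∈ Finset.univ.image F, pr p {ω | F ω = v ∧ C ω} := by
  classical
  unfold pr
  rw [Finset.sum_comm]
  refine Finset.sum_congr rfl fun ω _ => ?_
  by_cases hC : C ω
  · simp only [Set.mem_setOf_eq, hC, and_true, if_true]
    rw [Finset.sum_ite_eq (Finset.univ.image F) (F ω) (fun _ => p ω)]
    simp
  · simp [hC]

lemma pr_split_if {V W : Type*} (F : Ω → V) (G : V → W) (w : W) (C : Ω → Prop) :
    pr p {ω | G (F ω) = w ∧ C ω} =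
      ∑ v ∈ Finset.univ.image F, if G v = w then pr p {ω | F ω = v ∧ C ω} else 0 := by
  classical
  rw [pr_split p F (fun ω => G (F ω) = w ∧ C ω)]
  refine Finset.sum_congr rfl fun v _ => ?_
  by_cases h : G v = w
  · simp only [h, if_true]
    exact pr_congr p fun ω => by
      simp only [Set.mem_setOf_eq]
      constructor
      · rintro ⟨h1, _, h3⟩; exact ⟨h1, h3⟩
      · rintro ⟨h1, h3⟩; exact ⟨h1, h1 ▸ h, h3⟩
  · simp only [h, if_false]
    exact pr_empty p fun ω => by
      simp only [Set.mem_setOf_eq]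
      rintro ⟨h1, h2, _⟩; exact h (h1 ▸ h2)

end Helper

/-- Under conditional independence of `X` and `Y` given `θ`, local sufficiency of `T_x(X)` and
`T_y(Y)` for `θ` implies global sufficiency of the pair `(T_x(X), T_y(Y))` for `θ`. -/
theorem local_sufficiency_implies_global_condindep
    {Ω Θ 𝒳 𝒴 T₁ T₂ : Type*} [Fintype Ω]
    (p : Ω → ℝ) (hp : IsPMF p)
    (θ : Ω → Θ) (X : Ω → 𝒳) (Y : Ω → 𝒴) (Tx : 𝒳 → T₁) (Ty : 𝒴 → T₂)
    (hci : MarkovChain p X θ Y)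
    (hlx : MarkovChain p θ (fun ω => Tx (X ω)) X)
    (hly : MarkovChain p θ (fun ω => Ty (Y ω)) Y) :
    MarkovChain p θ (fun ω => (Tx (X ω), Ty (Y ω))) (fun ω => (X ω, Y ω)) := by
  obtain ⟨hp0, -⟩ := hp
  intro a b c
  obtain ⟨t1, t2⟩ := b
  obtain ⟨x, y⟩ := c
  simp only [Prod.mk.injEq]
  by_cases hmatch : Tx x = t1 ∧ Ty y = t2
  · obtain ⟨htx, hty⟩ := hmatch
    -- rewrite the two events containing (X,Y)=(x,y)
    have e1 : pr p {ω | θ ω = a ∧ (Tx (X ω) = t1 ∧ Ty (Y ω) = t2) ∧ X ω = x ∧ Y ω = y}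
        = pr p {ω | θ ω = a ∧ X ω = x ∧ Y ω = y} := by
      refine pr_congr p fun ω => ?_
      simp only [Set.mem_setOf_eq]
      constructor
      · rintro ⟨h1, _, h3, h4⟩; exact ⟨h1, h3, h4⟩
      · rintro ⟨h1, h3, h4⟩
        exact ⟨h1, ⟨by rw [h3]; exact htx, by rw [h4]; exact hty⟩, h3, h4⟩
    have e2 : pr p {ω | (Tx (X ω) = t1 ∧ Ty (Y ω) = t2) ∧ X ω = x ∧ Y ω = y}
        = pr p {ω | X ω = x ∧ Y ω = y} := by
      refine pr_congr p fun ω => ?_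
      simp only [Set.mem_setOf_eq]
      constructor
      · rintro ⟨_, h3, h4⟩; exact ⟨h3, h4⟩
      · rintro ⟨h3, h4⟩
        exact ⟨⟨by rw [h3]; exact htx, by rw [h4]; exact hty⟩, h3, h4⟩
    rw [e1, e2]
    -- K1 : T1 ⟂ Y given θ
    have K1 : ∀ (a' : Θ) (y' : 𝒴),
        pr p {ω | θ ω = a' ∧ Tx (X ω) = t1 ∧ Y ω = y'} * pr p {ω | θ ω = a'} =
        pr p {ω | θ ω = a' ∧ Tx (X ω) = t1} * pr p {ω | θ ω = a' ∧ Y ω = y'} := by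
      intro a' y'
      have r1 : pr p {ω | θ ω = a' ∧ Tx (X ω) = t1 ∧ Y ω = y'} =
          ∑ x' ∈ Finset.univ.image X,
            (if Tx x' = t1 then pr p {ω | X ω = x' ∧ θ ω = a' ∧ Y ω = y'} else 0) := by
        rw [pr_congr p (t := {ω | Tx (X ω) = t1 ∧ θ ω = a' ∧ Y ω = y'})
          (fun ω => by simp only [Set.mem_setOf_eq]; tauto)]
        exact pr_split_if p X Tx t1 (fun ω => θ ω = a' ∧ Y ω = y')
      have r2 : pr p {ω | θ ω = a' ∧ Tx (X ω) = t1} =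
          ∑ x' ∈ Finset.univ.image X,
            (if Tx x' = t1 then pr p {ω | X ω = x' ∧ θ ω = a'} else 0) := by
        rw [pr_congr p (t := {ω | Tx (X ω) = t1 ∧ θ ω = a'})
          (fun ω => by simp only [Set.mem_setOf_eq]; tauto)]
        exact pr_split_if p X Tx t1 (fun ω => θ ω = a')
      rw [r1, r2, Finset.sum_mul, Finset.sum_mul]
      refine Finset.sum_congr rfl fun x' _ => ?_
      by_cases h : Tx x' = t1
      · simp only [h, if_true]
        exact hci x' a' y'
      · simp [h]
    -- K2 : T1 ⟂ T2 given θ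
    have K2 : ∀ (a' : Θ),
        pr p {ω | θ ω = a' ∧ Tx (X ω) = t1 ∧ Ty (Y ω) = t2} * pr p {ω | θ ω = a'} =
        pr p {ω | θ ω = a' ∧ Tx (X ω) = t1} * pr p {ω | θ ω = a' ∧ Ty (Y ω) = t2} := by
      intro a'
      have r1 : pr p {ω | θ ω = a' ∧ Tx (X ω) = t1 ∧ Ty (Y ω) = t2} =
          ∑ y' ∈ Finset.univ.image Y,
            (if Ty y' = t2 then pr p {ω | Y ω = y' ∧ θ ω = a' ∧ Tx (X ω) = t1} else 0) := by
        rw [pr_congr p (t := {ω | Ty (Y ω) = t2 ∧ θ ω = a' ∧ Tx (X ω) = t1})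
          (fun ω => by simp only [Set.mem_setOf_eq]; tauto)]
        exact pr_split_if p Y Ty t2 (fun ω => θ ω = a' ∧ Tx (X ω) = t1)
      have r2 : pr p {ω | θ ω = a' ∧ Ty (Y ω) = t2} =
          ∑ y' ∈ Finset.univ.image Y,
            (if Ty y' = t2 then pr p {ω | Y ω = y' ∧ θ ω = a'} else 0) := by
        rw [pr_congr p (t := {ω | Ty (Y ω) = t2 ∧ θ ω = a'})
          (fun ω => by simp only [Set.mem_setOf_eq]; tauto)]
        exact pr_split_if p Y Ty t2 (fun ω => θ ω = a')
      rw [r1, r2, Finset.sum_mul, Finset.mul_sum]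
      refine Finset.sum_congr rfl fun y' _ => ?_
      by_cases h : Ty y' = t2
      · simp only [h, if_true]
        have := K1 a' y'
        rw [pr_congr p (s := {ω | Y ω = y' ∧ θ ω = a' ∧ Tx (X ω) = t1})
              (t := {ω | θ ω = a' ∧ Tx (X ω) = t1 ∧ Y ω = y'})
              (fun ω => by simp only [Set.mem_setOf_eq]; tauto),
            pr_congr p (s := {ω | Y ω = y' ∧ θ ω = a'}) (t := {ω | θ ω = a' ∧ Y ω = y'})
              (fun ω => by simp only [Set.mem_setOf_eq]; tauto)]
        exact this
      · simp [h]
    -- K3 : from hlx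
    have K3 : ∀ (a' : Θ),
        pr p {ω | θ ω = a' ∧ X ω = x} * pr p {ω | Tx (X ω) = t1} =
        pr p {ω | θ ω = a' ∧ Tx (X ω) = t1} * pr p {ω | X ω = x} := by
      intro a'
      have h := hlx a' t1 x
      simp only [] at h
      rw [pr_congr p (s := {ω | θ ω = a' ∧ Tx (X ω) = t1 ∧ X ω = x})
            (t := {ω | θ ω = a' ∧ X ω = x}) (fun ω => by
              simp only [Set.mem_setOf_eq]
              exact ⟨fun ⟨h1, _, h3⟩ => ⟨h1, h3⟩,
                fun ⟨h1, h3⟩ => ⟨h1, by rw [h3]; exact htx, h3⟩⟩),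
          pr_congr p (s := {ω | Tx (X ω) = t1 ∧ X ω = x}) (t := {ω | X ω = x}) (fun ω => by
              simp only [Set.mem_setOf_eq]
              exact ⟨fun ⟨_, h3⟩ => h3, fun h3 => ⟨by rw [h3]; exact htx, h3⟩⟩)] at h
      exact h
    -- K4 : from hly
    have K4 : ∀ (a' : Θ),
        pr p {ω | θ ω = a' ∧ Y ω = y} * pr p {ω | Ty (Y ω) = t2} =
        pr p {ω | θ ω = a' ∧ Ty (Y ω) = t2} * pr p {ω | Y ω = y} := by
      intro a'
      have h := hly a' t2 y
      simp only [] at h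
      rw [pr_congr p (s := {ω | θ ω = a' ∧ Ty (Y ω) = t2 ∧ Y ω = y})
            (t := {ω | θ ω = a' ∧ Y ω = y}) (fun ω => by
              simp only [Set.mem_setOf_eq]
              exact ⟨fun ⟨h1, _, h3⟩ => ⟨h1, h3⟩,
                fun ⟨h1, h3⟩ => ⟨h1, by rw [h3]; exact hty, h3⟩⟩),
          pr_congr p (s := {ω | Ty (Y ω) = t2 ∧ Y ω = y}) (t := {ω | Y ω = y}) (fun ω => by
              simp only [Set.mem_setOf_eq]
              exact ⟨fun ⟨_, h3⟩ => h3, fun h3 => ⟨by rw [h3]; exact hty, h3⟩⟩)] at h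
      exact h
    -- K5 : hci reordered
    have K5 : ∀ (a' : Θ),
        pr p {ω | θ ω = a' ∧ X ω = x ∧ Y ω = y} * pr p {ω | θ ω = a'} =
        pr p {ω | θ ω = a' ∧ X ω = x} * pr p {ω | θ ω = a' ∧ Y ω = y} := by
      intro a'
      have h := hci x a' y
      rw [pr_congr p (s := {ω | X ω = x ∧ θ ω = a' ∧ Y ω = y})
            (t := {ω | θ ω = a' ∧ X ω = x ∧ Y ω = y})
            (fun ω => by simp only [Set.mem_setOf_eq]; tauto),
          pr_congr p (s := {ω | X ω = x ∧ θ ω = a'}) (t := {ω | θ ω = a' ∧ X ω = x})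
            (fun ω => by simp only [Set.mem_setOf_eq]; tauto)] at h
      exact h
    -- D' : the key per-θ-value identity
    have D : ∀ (a' : Θ),
        pr p {ω | θ ω = a' ∧ X ω = x ∧ Y ω = y} * pr p {ω | Tx (X ω) = t1}
          * pr p {ω | Ty (Y ω) = t2} =
        pr p {ω | θ ω = a' ∧ Tx (X ω) = t1 ∧ Ty (Y ω) = t2} * pr p {ω | X ω = x}
          * pr p {ω | Y ω = y} := by
      intro a'
      by_cases hPa : pr p {ω | θ ω = a'} = 0
      · have z1 : pr p {ω | θ ω = a' ∧ X ω = x ∧ Y ω = y} = 0 :=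
          pr_zero_of_subset p hp0 (fun ω hω => hω.1) hPa
        have z2 : pr p {ω | θ ω = a' ∧ Tx (X ω) = t1 ∧ Ty (Y ω) = t2} = 0 :=
          pr_zero_of_subset p hp0 (fun ω hω => hω.1) hPa
        rw [z1, z2]; ring
      · refine mul_right_cancel₀ hPa ?_
        have h5 := K5 a'
        have h3 := K3 a'
        have h4 := K4 a'
        have h2 := K2 a'
        linear_combination (pr p {ω | Tx (X ω) = t1} * pr p {ω | Ty (Y ω) = t2}) * h5 +
          (pr p {ω | θ ω = a' ∧ Y ω = y} * pr p {ω | Ty (Y ω) = t2}) * h3 +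
          (pr p {ω | θ ω = a' ∧ Tx (X ω) = t1} * pr p {ω | X ω = x}) * h4 -
          (pr p {ω | X ω = x} * pr p {ω | Y ω = y}) * h2
    -- decompose the unconditional joints over θ
    have hPxy : pr p {ω | X ω = x ∧ Y ω = y} =
        ∑ a' ∈ Finset.univ.image θ, pr p {ω | θ ω = a' ∧ X ω = x ∧ Y ω = y} :=
      pr_split p θ (fun ω => X ω = x ∧ Y ω = y)
    have hPt12 : pr p {ω | Tx (X ω) = t1 ∧ Ty (Y ω) = t2} =
        ∑ a' ∈ Finset.univ.image θ, pr p {ω | θ ω = a' ∧ Tx (X ω) = t1 ∧ Ty (Y ω) = t2} :=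
      pr_split p θ (fun ω => Tx (X ω) = t1 ∧ Ty (Y ω) = t2)
    -- handle degenerate Pt1/Pt2
    by_cases hPt1 : pr p {ω | Tx (X ω) = t1} = 0
    · have z1 : pr p {ω | Tx (X ω) = t1 ∧ Ty (Y ω) = t2} = 0 :=
        pr_zero_of_subset p hp0 (fun ω hω => hω.1) hPt1
      have z2 : pr p {ω | θ ω = a ∧ Tx (X ω) = t1 ∧ Ty (Y ω) = t2} = 0 :=
        pr_zero_of_subset p hp0 (fun ω hω => hω.2.1) hPt1
      rw [z1, z2]; ring
    by_cases hPt2 : pr p {ω | Ty (Y ω) = t2} = 0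
    · have z1 : pr p {ω | Tx (X ω) = t1 ∧ Ty (Y ω) = t2} = 0 :=
        pr_zero_of_subset p hp0 (fun ω hω => hω.2) hPt2
      have z2 : pr p {ω | θ ω = a ∧ Tx (X ω) = t1 ∧ Ty (Y ω) = t2} = 0 :=
        pr_zero_of_subset p hp0 (fun ω hω => hω.2.2) hPt2
      rw [z1, z2]; ring
    -- main computation
    refine mul_right_cancel₀ (mul_ne_zero hPt1 hPt2) ?_
    have sumeq : (∑ a' ∈ Finset.univ.image θ, pr p {ω | θ ω = a' ∧ X ω = x ∧ Y ω = y}) *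
        (pr p {ω | Tx (X ω) = t1} * pr p {ω | Ty (Y ω) = t2}) =
        (∑ a' ∈ Finset.univ.image θ,
          pr p {ω | θ ω = a' ∧ Tx (X ω) = t1 ∧ Ty (Y ω) = t2}) *
        (pr p {ω | X ω = x} * pr p {ω | Y ω = y}) := by
      rw [Finset.sum_mul, Finset.sum_mul]
      exact Finset.sum_congr rfl fun a' _ => by linear_combination D a'
    rw [hPxy, hPt12]
    linear_combination
      (∑ a' ∈ Finset.univ.image θ,
        pr p {ω | θ ω = a' ∧ Tx (X ω) = t1 ∧ Ty (Y ω) = t2}) * D a -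
      pr p {ω | θ ω = a ∧ Tx (X ω) = t1 ∧ Ty (Y ω) = t2} * sumeq
  · -- degenerate case : (x, y) incompatible with (t1, t2)
    have z1 : pr p {ω | θ ω = a ∧ (Tx (X ω) = t1 ∧ Ty (Y ω) = t2) ∧ X ω = x ∧ Y ω = y} = 0 := by
      refine pr_empty p fun ω => ?_
      simp only [Set.mem_setOf_eq]
      rintro ⟨-, ⟨ht1, ht2⟩, hx, hy⟩
      exact hmatch ⟨hx ▸ ht1, hy ▸ ht2⟩
    have z2 : pr p {ω | (Tx (X ω) = t1 ∧ Ty (Y ω) = t2) ∧ X ω = x ∧ Y ω = y} = 0 := by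
      refine pr_empty p fun ω => ?_
      simp only [Set.mem_setOf_eq]
      rintro ⟨⟨ht1, ht2⟩, hx, hy⟩
      exact hmatch ⟨hx ▸ ht1, hy ▸ ht2⟩
    rw [z1, z2]; ring
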